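/- Let U ⊆ ℝ² be open and let h, w : U → M₂(ℝ) be continuously differentiable maps such that at every point x ∈ U the matrix h(x) is symmetric and invertible, the matrix w(x) is symmetric, the trace of h(x)⁻¹·w(x) is zero, and the Codazzi-type equations ∂₂(w₁₁) = ∂₁(w₁₂) and ∂₂(w₂₁) = ∂₁(w₂₂) hold on U. Then for each i ∈ {1,2}, the divergence ∂₁[det(h)·(h⁻¹ w h⁻¹)_{i1}] + ∂₂[det(h)·(h⁻¹ w h⁻¹)_{i2}] vanishes identically on U. -/

import Mathlib

theorem key (A B : Matrix (Fin 2) (Fin 2) ℝ) (hd : A.det ≠ 0)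
    (htr : (A⁻¹ * B).trace = 0) :
    A.det • (A⁻¹ * B * A⁻¹) = !![-(B 1 1), B 0 1; B 1 0, -(B 0 0)] := by
  have hinv : A⁻¹ = A.det⁻¹ • A.adjugate := by
    rw [Matrix.inv_def, Ring.inverse_eq_inv']
  have hd2 : A 0 0 * A 1 1 - A 0 1 * A 1 0 ≠ 0 := by rwa [Matrix.det_fin_two] at hd
  rw [hinv] at htr
  have htr' : A 1 1 * B 0 0 - A 0 1 * B 1 0 - A 1 0 * B 0 1 + A 0 0 * B 1 1 = 0 := by
    simp [Matrix.vecMul, dotProduct, Matrix.trace_fin_two, Matrix.mul_apply, Fin.sum_univ_two,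
      Matrix.adjugate_fin_two, Matrix.smul_apply, smul_eq_mul, Matrix.det_fin_two,
      Matrix.cons_val', Matrix.cons_val_zero, Matrix.cons_val_one, Matrix.head_cons,
      Matrix.empty_val', Matrix.cons_val_fin_one, Matrix.head_fin_const] at htr
    have h1 : (A 1 1 * B 0 0 - A 0 1 * B 1 0 - A 1 0 * B 0 1 + A 0 0 * B 1 1)
        * (A 0 0 * A 1 1 - A 0 1 * A 1 0)⁻¹ = 0 := by linear_combination htr
    rcases mul_eq_zero.mp h1 with h2 | h2
    · exact h2
    · exact absurd (inv_eq_zero.mp h2) hd2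
  have hN : A.adjugate * B * A.adjugate
      = A.det • !![-(B 1 1), B 0 1; B 1 0, -(B 0 0)] := by
    ext i j
    fin_cases i <;> fin_cases j <;>
      simp [Matrix.vecMul, dotProduct, Matrix.mul_apply, Fin.sum_univ_two, Matrix.adjugate_fin_two,
        Matrix.smul_apply, smul_eq_mul, Matrix.det_fin_two,
        Matrix.cons_val', Matrix.cons_val_zero, Matrix.cons_val_one, Matrix.head_cons,
        Matrix.empty_val', Matrix.cons_val_fin_one, Matrix.head_fin_const]
    · linear_combination A 1 1 * htr'
    · linear_combination (-(A 0 1)) * htr'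
    · linear_combination (-(A 1 0)) * htr'
    · linear_combination A 0 0 * htr'
  rw [hinv, Matrix.smul_mul, Matrix.smul_mul, Matrix.mul_smul, smul_smul, smul_smul, hN,
    smul_smul]
  rw [show A.det * A.det⁻¹ * A.det⁻¹ * A.det = 1 by field_simp, one_smul]

/-- divergence-free identity for trace-free Codazzi tensors.
Here `∂₁ f x = fderiv ℝ f x (1,0)` and `∂₂ f x = fderiv ℝ f x (0,1)` are the partial
derivatives on `ℝ²`, and `(h x)⁻¹ * w x * (h x)⁻¹` is the matrix `h⁻¹ w h⁻¹`. -/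
theorem stmt_4 (U : Set (ℝ × ℝ)) (hU : IsOpen U)
    (h w : ℝ × ℝ → Matrix (Fin 2) (Fin 2) ℝ)
    (hh : ∀ i j : Fin 2, ContDiffOn ℝ 1 (fun y => h y i j) U)
    (hw : ∀ i j : Fin 2, ContDiffOn ℝ 1 (fun y => w y i j) U)
    (hhsymm : ∀ x ∈ U, (h x).IsSymm)
    (hhinv : ∀ x ∈ U, IsUnit (h x).det)
    (hwsymm : ∀ x ∈ U, (w x).IsSymm)
    (htr : ∀ x ∈ U, Matrix.trace ((h x)⁻¹ * w x) = 0)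
    (hcod1 : ∀ x ∈ U,
      fderiv ℝ (fun y => w y 0 0) x (0, 1) = fderiv ℝ (fun y => w y 0 1) x (1, 0))
    (hcod2 : ∀ x ∈ U,
      fderiv ℝ (fun y => w y 1 0) x (0, 1) = fderiv ℝ (fun y => w y 1 1) x (1, 0)) :
    ∀ i : Fin 2, ∀ x ∈ U,
      fderiv ℝ (fun y => (h y).det * ((h y)⁻¹ * w y * (h y)⁻¹) i 0) x (1, 0)
        + fderiv ℝ (fun y => (h y).det * ((h y)⁻¹ * w y * (h y)⁻¹) i 1) x (0, 1) = 0 := by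
  intro i x hx
  have hmem : U ∈ nhds x := hU.mem_nhds hx
  have hkey : ∀ y ∈ U, ∀ a b : Fin 2,
      (h y).det * ((h y)⁻¹ * w y * (h y)⁻¹) a b
        = !![-(w y 1 1), w y 0 1; w y 1 0, -(w y 0 0)] a b := by
    intro y hy a b
    have := key (h y) (w y) (hhinv y hy).ne_zero (htr y hy)
    have := congrFun (congrFun this a) b
    simpa [Matrix.smul_apply, smul_eq_mul] using this
  have esym : (fun y => w y 0 1) =ᶠ[nhds x] (fun y => w y 1 0) := by
    filter_upwards [hmem] with y hy
    exact ((hwsymm y hy).apply 0 1).symm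
  fin_cases i
  · have e0 : (fun y => (h y).det * ((h y)⁻¹ * w y * (h y)⁻¹) 0 0)
        =ᶠ[nhds x] (fun y => -(w y 1 1)) := by
      filter_upwards [hmem] with y hy
      simpa using hkey y hy 0 0
    have e1 : (fun y => (h y).det * ((h y)⁻¹ * w y * (h y)⁻¹) 0 1)
        =ᶠ[nhds x] (fun y => w y 0 1) := by
      filter_upwards [hmem] with y hy
      simpa using hkey y hy 0 1
    show fderiv ℝ (fun y => (h y).det * ((h y)⁻¹ * w y * (h y)⁻¹) 0 0) x (1, 0)
        + fderiv ℝ (fun y => (h y).det * ((h y)⁻¹ * w y * (h y)⁻¹) 0 1) x (0, 1) = 0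
    rw [e0.fderiv_eq, e1.fderiv_eq, esym.fderiv_eq, fderiv_fun_neg, hcod2 x hx,
      ContinuousLinearMap.neg_apply]
    ring
  · have e0 : (fun y => (h y).det * ((h y)⁻¹ * w y * (h y)⁻¹) 1 0)
        =ᶠ[nhds x] (fun y => w y 1 0) := by
      filter_upwards [hmem] with y hy
      simpa using hkey y hy 1 0
    have e1 : (fun y => (h y).det * ((h y)⁻¹ * w y * (h y)⁻¹) 1 1)
        =ᶠ[nhds x] (fun y => -(w y 0 0)) := by
      filter_upwards [hmem] with y hy
      simpa using hkey y hy 1 1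
    have hsw : fderiv ℝ (fun y => w y 1 0) x (1, 0)
        = fderiv ℝ (fun y => w y 0 1) x (1, 0) := by
      rw [esym.fderiv_eq]
    show fderiv ℝ (fun y => (h y).det * ((h y)⁻¹ * w y * (h y)⁻¹) 1 0) x (1, 0)
        + fderiv ℝ (fun y => (h y).det * ((h y)⁻¹ * w y * (h y)⁻¹) 1 1) x (0, 1) = 0
    rw [e0.fderiv_eq, e1.fderiv_eq, fderiv_fun_neg, hsw, ← hcod1 x hx,
      ContinuousLinearMap.neg_apply]
    ring
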